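/- Let q = 2^m with m ≥ 1, F_q = GaloisField 2 m, and let P be a point of ℙ¹(F_q). Then the stabilizer of P in SL(2,F_q) has order q(q − 1), every element of this stabilizer maps some 2-element subset of ℙ¹(F_q) onto itself, and consequently the stabilizer is an intersecting set with respect to the induced action on 2-element subsets of ℙ¹(F_q). -/

import Mathlib

open scoped Pointwise MatrixGroups

noncomputable section

/-- The projective line over `K`. -/
abbrev Proj (K : Type*) [Field K] := Projectivization K (Fin 2 → K)

variable {K : Type*} [Field K]

lemma GLmulVecLin_injective (g : GL (Fin 2) K) :
    Function.Injective ((g : Matrix (Fin 2) (Fin 2) K).mulVecLin) := by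
  intro u v huv
  have h := congrArg ((((g⁻¹ : GL (Fin 2) K) : Matrix (Fin 2) (Fin 2) K)).mulVecLin) huv
  simp only [Matrix.mulVecLin_apply, Matrix.mulVec_mulVec] at h
  rw [show ((g⁻¹ : GL (Fin 2) K) : Matrix (Fin 2) (Fin 2) K) * (g : Matrix (Fin 2) (Fin 2) K) = 1
    from g.inv_mul, Matrix.one_mulVec, Matrix.one_mulVec] at h
  exact h

lemma GLmulVec_ne_zero (g : GL (Fin 2) K) {v : Fin 2 → K} (hv : v ≠ 0) :
    (g : Matrix (Fin 2) (Fin 2) K).mulVec v ≠ 0 := by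
  intro h
  apply hv
  have : ((g : Matrix (Fin 2) (Fin 2) K)).mulVecLin v =
      ((g : Matrix (Fin 2) (Fin 2) K)).mulVecLin 0 := by
    simpa [Matrix.mulVecLin_apply] using h
  simpa using GLmulVecLin_injective g this

/-- The action of `GL(2,K)` on the projective line by matrix-vector multiplication on
representatives. -/
instance GLProjAction : MulAction (GL (Fin 2) K) (Proj K) where
  smul g x := Projectivization.map ((g : Matrix (Fin 2) (Fin 2) K).mulVecLin)
    (GLmulVecLin_injective g) x
  one_smul x := by
    induction x using Projectivization.ind with
    | h v hv =>
      show Projectivization.map _ _ _ = _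
      simp [Projectivization.map_mk]
  mul_smul g h x := by
    induction x using Projectivization.ind with
    | h v hv =>
      show Projectivization.map _ _ _ =
        Projectivization.map _ _ (Projectivization.map _ _ _)
      simp [Projectivization.map_mk, Matrix.mulVecLin_apply, Matrix.mulVec_mulVec,
        Units.val_mul]

lemma GL_smul_mk (g : GL (Fin 2) K) (v : Fin 2 → K) (hv : v ≠ 0) :
    g • Projectivization.mk K v hv =
      Projectivization.mk K ((g : Matrix (Fin 2) (Fin 2) K).mulVec v)
        (GLmulVec_ne_zero g hv) := by
  show Projectivization.map _ _ _ = _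
  simp [Projectivization.map_mk, Matrix.mulVecLin_apply]

/-- The action of `SL(2,K)` on the projective line. -/
instance SLProjAction : MulAction (Matrix.SpecialLinearGroup (Fin 2) K) (Proj K) :=
  MulAction.compHom _ (Matrix.SpecialLinearGroup.toGL)

end

noncomputable section
variable {K : Type*} [Field K]

lemma center_smul_eq (c : GL (Fin 2) K) (hc : c ∈ Subgroup.center (GL (Fin 2) K))
    (x : Proj K) : c • x = x := by
  have hcomm : ∀ t : Matrix.TransvectionStruct (Fin 2) K,
      Commute t.toMatrix (c : Matrix (Fin 2) (Fin 2) K) := by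
    intro t
    let u : GL (Fin 2) K := ⟨t.toMatrix, t.inv.toMatrix, t.mul_inv, t.inv_mul⟩
    have h := Subgroup.mem_center_iff.mp hc u
    have := congrArg Units.val h
    simpa [u, Commute, SemiconjBy] using this
  obtain ⟨r, hr⟩ := Matrix.mem_range_scalar_of_commute_transvectionStruct hcomm
  have hr0 : r ≠ 0 := by
    intro h0
    have hne : (![1, 0] : Fin 2 → K) ≠ 0 := by
      intro h
      have := congrFun h 0
      simp at this
    have := GLmulVec_ne_zero c hne
    rw [← hr, h0] at this
    rw [show (0 : K) = (0 : K) from rfl] at this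
    apply this
    funext i
    simp [Matrix.mulVec_diagonal]
  induction x using Projectivization.ind with
  | h v hv =>
    rw [GL_smul_mk]
    rw [Projectivization.mk_eq_mk_iff]
    refine ⟨Units.mk0 r hr0, ?_⟩
    rw [← hr]
    funext i
    simp [Matrix.mulVec_diagonal]

end

noncomputable section

/-- The projective general linear group `PGL(2,K) = GL(2,K)/Z(GL(2,K))`. -/
abbrev PGL2 (K : Type*) [Field K] : Type _ :=
  GL (Fin 2) K ⧸ Subgroup.center (GL (Fin 2) K)

variable {K : Type*} [Field K]

/-- The action of `GL(2,K)` on the projective line descends to `PGL(2,K)`. -/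
instance PGLProjSMul : SMul (PGL2 K) (Proj K) :=
  ⟨fun g x => Quotient.liftOn' g (fun a => a • x) (by
    intro a b hab
    rw [QuotientGroup.leftRel_apply] at hab
    show a • x = b • x
    have hb : b = a * (a⁻¹ * b) := by group
    rw [hb, mul_smul, center_smul_eq _ hab])⟩

instance PGLProjAction : MulAction (PGL2 K) (Proj K) where
  one_smul x := center_smul_eq 1 (Subgroup.one_mem _) x
  mul_smul g h x := by
    induction g using Quotient.inductionOn' with
    | h a =>
      induction h using Quotient.inductionOn' with
      | h b => exact mul_smul a b x

lemma PGL2_smul_mk' (a : GL (Fin 2) K) (x : Proj K) :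
    (QuotientGroup.mk a : PGL2 K) • x = a • x := rfl

/-- The natural homomorphism `SL(2,K) → PGL(2,K)`. -/
def SLtoPGL2 (K : Type*) [Field K] : Matrix.SpecialLinearGroup (Fin 2) K →* PGL2 K :=
  (QuotientGroup.mk' (Subgroup.center (GL (Fin 2) K))).comp Matrix.SpecialLinearGroup.toGL

/-- `PSL(2,K)`, realized as the image of `SL(2,K)` in `PGL(2,K)`. -/
def PSL2 (K : Type*) [Field K] : Subgroup (PGL2 K) := (SLtoPGL2 K).range

/-- A subset `F` of a group `G` acting on the projective line over `K` is *intersecting for the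
action on `k`-element subsets* if any two of its elements agree on some `k`-element subset of
the projective line. -/
def IntersectingOnSubsets (G : Type*) [Group G] (K : Type*) [Field K]
    [MulAction G (Proj K)] (k : ℕ) (F : Set G) : Prop :=
  ∀ g ∈ F, ∀ h ∈ F, ∃ S : Set (Proj K), S.ncard = k ∧ g • S = h • S

end


noncomputable section Aux2
variable {K : Type*} [Field K]

lemma CH2 (A : Matrix (Fin 2) (Fin 2) K) :
    A * A - (Matrix.trace A) • A + (A.det) • (1 : Matrix (Fin 2) (Fin 2) K) = 0 := by
  ext i j
  fin_cases i <;> fin_cases j <;>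
    simp [Matrix.mul_apply, Fin.sum_univ_two, Matrix.trace_fin_two, Matrix.det_fin_two,
      Matrix.one_apply] <;> ring

lemma det_sub_smul_one2 (A : Matrix (Fin 2) (Fin 2) K) (x : K) :
    (A - x • 1).det = x ^ 2 - Matrix.trace A * x + A.det := by
  simp [Matrix.det_fin_two, Matrix.trace_fin_two, Matrix.one_apply, Matrix.sub_apply]
  ring

lemma eigen_quadratic {A : Matrix (Fin 2) (Fin 2) K} {v : Fin 2 → K} (hv : v ≠ 0)
    {c : K} (h : A.mulVec v = c • v) (hdet : A.det = 1) :
    c ^ 2 - Matrix.trace A * c + 1 = 0 := by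
  have e1 : (A * A).mulVec v = (c * c) • v := by
    rw [← Matrix.mulVec_mulVec, h, Matrix.mulVec_smul, h, smul_smul]
  have h2 := congrArg (fun M : Matrix (Fin 2) (Fin 2) K => M.mulVec v) (CH2 A)
  simp only [Matrix.add_mulVec, Matrix.sub_mulVec, Matrix.smul_mulVec, e1, h, hdet,
    Matrix.one_mulVec, Matrix.zero_mulVec, one_smul, smul_smul] at h2
  have h3 : (c ^ 2 - Matrix.trace A * c + 1) • v = 0 := by
    rw [add_smul, sub_smul, one_smul, pow_two]
    exact h2
  rcases smul_eq_zero.mp h3 with h4 | h4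
  · exact h4
  · exact absurd h4 hv

lemma SL_smul_mk (g : Matrix.SpecialLinearGroup (Fin 2) K) (v : Fin 2 → K) (hv : v ≠ 0) :
    g • Projectivization.mk K v hv =
      Projectivization.mk K ((g : Matrix (Fin 2) (Fin 2) K).mulVec v)
        (GLmulVec_ne_zero (Matrix.SpecialLinearGroup.toGL g) hv) := by
  show (Matrix.SpecialLinearGroup.toGL g) • Projectivization.mk K v hv = _
  rw [GL_smul_mk]
  rfl

lemma SL_sq_eq_one_of_trace_zero [CharP K 2] (g : Matrix.SpecialLinearGroup (Fin 2) K)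
    (ht : Matrix.trace (g : Matrix (Fin 2) (Fin 2) K) = 0) : g * g = 1 := by
  have h := CH2 (g : Matrix (Fin 2) (Fin 2) K)
  rw [ht, zero_smul, sub_zero, g.prop, one_smul] at h
  apply Subtype.ext
  show (g : Matrix (Fin 2) (Fin 2) K) * g = 1
  have : (g : Matrix (Fin 2) (Fin 2) K) * g = -1 := by linear_combination (norm := abel) h
  rw [this, CharTwo.neg_eq]

lemma second_fix_or_sq_one [CharP K 2] (g : Matrix.SpecialLinearGroup (Fin 2) K) (P : Proj K)
    (hg : g • P = P) : (∃ Q : Proj K, Q ≠ P ∧ g • Q = Q) ∨ g * g = 1 := by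
  by_cases hex : ∃ Q : Proj K, Q ≠ P ∧ g • Q = Q
  · exact Or.inl hex
  right
  induction P using Projectivization.ind with
  | h v hv =>
  rw [SL_smul_mk] at hg
  obtain ⟨a, ha⟩ := (Projectivization.mk_eq_mk_iff _ _ _ _ _).mp hg
  have hgv : (g : Matrix (Fin 2) (Fin 2) K).mulVec v = (a : K) • v := by rw [← ha]; rfl
  have hquad := eigen_quadratic hv (c := (a : K)) hgv g.prop
  have ht : Matrix.trace (g : Matrix (Fin 2) (Fin 2) K) = 0 := by
    by_contra ht
    apply hex
    set t := Matrix.trace (g : Matrix (Fin 2) (Fin 2) K) with htdef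
    set c : K := (a : K) with hcdef
    have hc : c ≠ 0 := a.ne_zero
    have hdet0 : ((g : Matrix (Fin 2) (Fin 2) K) - c⁻¹ • 1).det = 0 := by
      rw [det_sub_smul_one2, g.prop, ← htdef]
      have hu : c * c⁻¹ = 1 := mul_inv_cancel₀ hc
      linear_combination c⁻¹ ^ 2 * hquad + (-(c⁻¹ * c) + t * c⁻¹ - 1) * hu
    obtain ⟨w, hw, hww⟩ := (Matrix.exists_mulVec_eq_zero_iff).mpr hdet0
    have hgw : (g : Matrix (Fin 2) (Fin 2) K).mulVec w = c⁻¹ • w := by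
      have := hww
      rw [Matrix.sub_mulVec, Matrix.smul_mulVec, Matrix.one_mulVec, sub_eq_zero] at this
      exact this
    refine ⟨Projectivization.mk K w hw, ?_, ?_⟩
    · intro hQP
      rw [Projectivization.mk_eq_mk_iff] at hQP
      obtain ⟨b, hb⟩ := hQP
      have h1 : (g : Matrix (Fin 2) (Fin 2) K).mulVec w = ((b : K) * c) • v := by
        rw [← hb]
        show (g : Matrix (Fin 2) (Fin 2) K).mulVec ((b : K) • v) = _
        rw [Matrix.mulVec_smul, hgv, smul_smul]
      have h2 : (g : Matrix (Fin 2) (Fin 2) K).mulVec w = (c⁻¹ * (b : K)) • v := by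
        rw [hgw, ← hb]
        show c⁻¹ • (b : K) • v = _
        rw [smul_smul]
      have h3 : ((b : K) * c - c⁻¹ * (b : K)) • v = 0 := by
        rw [sub_smul, ← h1, ← h2, sub_self]
      have h4 : (b : K) * c - c⁻¹ * (b : K) = 0 := by
        rcases smul_eq_zero.mp h3 with h | h
        · exact h
        · exact absurd h hv
      have hcc : c * c = 1 := by
        have hb0 : (b : K) ≠ 0 := b.ne_zero
        have h5 : (b : K) * (c * c) = (b : K) * 1 := by
          have hcinv : c⁻¹ * c = 1 := inv_mul_cancel₀ hc
          linear_combination c * h4 + (b : K) * hcinv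
        rcases mul_eq_mul_left_iff.mp h5 with h | h
        · exact h
        · exact absurd h hb0
      have hc1 : c = 1 := by
        have h2K : (2 : K) = 0 := by
          have := CharP.cast_eq_zero K 2
          simpa using this
        have hsq0 : (c - 1) ^ 2 = 0 := by linear_combination hcc - c * h2K + h2K
        exact sub_eq_zero.mp (pow_eq_zero_iff (n := 2) (by norm_num) |>.mp hsq0)
      apply ht
      have h2K : (2 : K) = 0 := by
        have := CharP.cast_eq_zero K 2
        simpa using this
      rw [hc1] at hquad
      linear_combination -hquad + h2K
    · rw [SL_smul_mk]
      apply (Projectivization.mk_eq_mk_iff _ _ _ _ _).mpr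
      refine ⟨(Units.mk0 c hc)⁻¹, ?_⟩
      rw [hgw]
      rfl
  exact SL_sq_eq_one_of_trace_zero g ht

lemma exists_ne_point (P : Proj K) : ∃ Q : Proj K, Q ≠ P := by
  have h0 : (![1, 0] : Fin 2 → K) ≠ 0 := by
    intro h; have := congrFun h 0; simp at this
  have h1 : (![0, 1] : Fin 2 → K) ≠ 0 := by
    intro h; have := congrFun h 1; simp at this
  have hne : Projectivization.mk K ![1, 0] h0 ≠ Projectivization.mk K ![0, 1] h1 := by
    rw [Ne, Projectivization.mk_eq_mk_iff]
    rintro ⟨a, ha⟩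
    have := congrFun ha 0
    simp [Units.smul_def] at this
  by_cases h : Projectivization.mk K ![1, 0] h0 = P
  · exact ⟨Projectivization.mk K ![0, 1] h1, by rw [← h]; exact hne.symm⟩
  · exact ⟨Projectivization.mk K ![1, 0] h0, h⟩

open scoped Pointwise in
lemma exists_pair_of_fix [CharP K 2] (g : Matrix.SpecialLinearGroup (Fin 2) K) (P : Proj K)
    (hg : g • P = P) : ∃ S : Set (Proj K), S.ncard = 2 ∧ g • S = S := by
  rcases second_fix_or_sq_one g P hg with ⟨Q, hQP, hQ⟩ | hsq
  · refine ⟨{P, Q}, Set.ncard_pair hQP.symm, ?_⟩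
    rw [Set.smul_set_insert, Set.smul_set_singleton, hg, hQ]
  · by_cases htriv : ∀ Q : Proj K, g • Q = Q
    · obtain ⟨Q, hQP⟩ := exists_ne_point P
      refine ⟨{P, Q}, Set.ncard_pair hQP.symm, ?_⟩
      rw [Set.smul_set_insert, Set.smul_set_singleton, hg, htriv Q]
    · push_neg at htriv
      obtain ⟨Q, hQ⟩ := htriv
      refine ⟨{Q, g • Q}, Set.ncard_pair (Ne.symm hQ), ?_⟩
      rw [Set.smul_set_insert, Set.smul_set_singleton]
      have : g • g • Q = Q := by rw [← mul_smul, hsq, one_smul]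
      rw [this, Set.pair_comm]

end Aux2


noncomputable section Aux3
open scoped Pointwise
variable {K : Type*} [Field K]

/-- Equivalence of projectivizations induced by a linear equivalence. -/
def projCongr {V W : Type*} [AddCommGroup V] [Module K V] [AddCommGroup W] [Module K W]
    (e : V ≃ₗ[K] W) : Projectivization K V ≃ Projectivization K W where
  toFun := Projectivization.map e.toLinearMap e.injective
  invFun := Projectivization.map e.symm.toLinearMap e.symm.injective
  left_inv x := by
    induction x using Projectivization.ind with
    | h v hv =>
      rw [Projectivization.map_mk, Projectivization.map_mk]
      exact (Projectivization.mk_eq_mk_iff _ _ _ _ _).mpr ⟨1, by simp⟩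
  right_inv x := by
    induction x using Projectivization.ind with
    | h v hv =>
      rw [Projectivization.map_mk, Projectivization.map_mk]
      exact (Projectivization.mk_eq_mk_iff _ _ _ _ _).mpr ⟨1, by simp⟩

lemma card_Proj [Fintype K] [DecidableEq K] : Nat.card (Proj K) = Fintype.card K + 1 := by
  have e1 : Proj K ≃ Projectivization K (K × K) := projCongr (LinearEquiv.piFinTwo K (fun _ => K))
  have e2 : OnePoint K ≃ Proj K := OnePoint.equivProjectivization K
  have e3 : OnePoint K ≃ Option K := Equiv.refl _
  rw [Nat.card_congr (e2.symm.trans e3), Nat.card_eq_fintype_card,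
    Fintype.card_option]

lemma det_GL_surjective :
    Function.Surjective (Matrix.GeneralLinearGroup.det : GL (Fin 2) K →* Kˣ) := by
  intro u
  have hdet : (Matrix.diagonal ![(u : K), 1]).det = (u : K) := by
    rw [Matrix.det_diagonal]
    simp [Fin.prod_univ_two]
  refine ⟨Matrix.GeneralLinearGroup.mkOfDetNeZero _ (hdet ▸ u.ne_zero), Units.ext ?_⟩
  show (Matrix.diagonal ![(u : K), 1]).det = (u : K)
  exact hdet

/-- `SL(2,K)` is equivalent to the kernel of the determinant on `GL(2,K)`. -/
def SLEquivKer : Matrix.SpecialLinearGroup (Fin 2) K ≃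
    (Matrix.GeneralLinearGroup.det : GL (Fin 2) K →* Kˣ).ker where
  toFun g := ⟨Matrix.SpecialLinearGroup.toGL g, Matrix.SpecialLinearGroup.coeToGL_det g⟩
  invFun u := ⟨((u : GL (Fin 2) K) : Matrix (Fin 2) (Fin 2) K), by
    have := u.prop
    rw [MonoidHom.mem_ker] at this
    exact congrArg Units.val this⟩
  left_inv g := rfl
  right_inv u := by
    apply Subtype.ext
    apply Units.ext
    rfl

lemma card_SL2_mul : Nat.card (Matrix.SpecialLinearGroup (Fin 2) K) * Nat.card Kˣ =
    Nat.card (GL (Fin 2) K) := by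
  rw [Subgroup.card_eq_card_quotient_mul_card_subgroup
    (Matrix.GeneralLinearGroup.det : GL (Fin 2) K →* Kˣ).ker,
    Nat.card_congr (QuotientGroup.quotientKerEquivOfSurjective _ det_GL_surjective).toEquiv,
    Nat.card_congr (SLEquivKer (K := K)), mul_comm]

end Aux3


noncomputable section Aux4
variable {K : Type*} [Field K]

lemma e0_ne_zero : (![1, 0] : Fin 2 → K) ≠ 0 := by
  intro h; have := congrFun h 0; simp at this

lemma exists_SL_smul_base (x : Proj K) :
    ∃ g : Matrix.SpecialLinearGroup (Fin 2) K,
      g • (Projectivization.mk K ![1, 0] e0_ne_zero) = x := by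
  induction x using Projectivization.ind with
  | h v hv =>
  by_cases h0 : v 0 = 0
  · have h1 : v 1 ≠ 0 := by
      intro h1; apply hv; funext i; fin_cases i <;> simp [h0, h1]
    refine ⟨⟨!![0, -(v 1)⁻¹; v 1, 0], by
      rw [Matrix.det_fin_two_of]; simp [h1]⟩, ?_⟩
    refine (SL_smul_mk _ _ _).trans ?_
    apply (Projectivization.mk_eq_mk_iff _ _ _ _ _).mpr
    refine ⟨1, ?_⟩
    rw [one_smul]
    funext i
    fin_cases i <;>
      simp [Matrix.mulVec, dotProduct, Fin.sum_univ_two, h0]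
  · refine ⟨⟨!![v 0, 0; v 1, (v 0)⁻¹], by
      rw [Matrix.det_fin_two_of]; simp [h0]⟩, ?_⟩
    refine (SL_smul_mk _ _ _).trans ?_
    apply (Projectivization.mk_eq_mk_iff _ _ _ _ _).mpr
    refine ⟨1, ?_⟩
    rw [one_smul]
    funext i
    fin_cases i <;>
      simp [Matrix.mulVec, dotProduct, Fin.sum_univ_two]

instance SL_pretransitive :
    MulAction.IsPretransitive (Matrix.SpecialLinearGroup (Fin 2) K) (Proj K) := by
  constructor
  intro x y
  obtain ⟨gx, hgx⟩ := exists_SL_smul_base x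
  obtain ⟨gy, hgy⟩ := exists_SL_smul_base y
  refine ⟨gy * gx⁻¹, ?_⟩
  rw [mul_smul, ← hgx, inv_smul_smul, hgy]

end Aux4

open scoped Pointwise in
/-- For `q = 2^m`, the stabilizer in `SL(2, F_q)` of a point of the projective
line has order `q(q-1)`, each of its elements maps some 2-element subset of the projective line
onto itself, and the stabilizer is intersecting for the action on 2-element subsets. -/
theorem point_stabilizer_intersecting_on_two_subsets (m : ℕ) (hm : 1 ≤ m)
    (P : Proj (GaloisField 2 m)) :
    Nat.card (MulAction.stabilizer (Matrix.SpecialLinearGroup (Fin 2) (GaloisField 2 m)) P) =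
        2 ^ m * (2 ^ m - 1) ∧
    (∀ g ∈ MulAction.stabilizer (Matrix.SpecialLinearGroup (Fin 2) (GaloisField 2 m)) P,
      ∃ S : Set (Proj (GaloisField 2 m)), S.ncard = 2 ∧ g • S = S) ∧
    IntersectingOnSubsets _ (GaloisField 2 m) 2
      ((MulAction.stabilizer (Matrix.SpecialLinearGroup (Fin 2) (GaloisField 2 m)) P :
          Subgroup (Matrix.SpecialLinearGroup (Fin 2) (GaloisField 2 m))) :
        Set (Matrix.SpecialLinearGroup (Fin 2) (GaloisField 2 m))) := by
    classical
  haveI : Fintype (GaloisField 2 m) := Fintype.ofFinite _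
  have hm0 : m ≠ 0 := by omega
  have hq : Fintype.card (GaloisField 2 m) = 2 ^ m := by
    rw [← Nat.card_eq_fintype_card]
    exact GaloisField.card 2 m hm0
  set q := 2 ^ m with hqdef
  have hq2 : 2 ≤ q := by
    calc 2 = 2 ^ 1 := rfl
    _ ≤ 2 ^ m := Nat.pow_le_pow_right (by norm_num) hm
  obtain ⟨r, hr⟩ : ∃ r, q = r + 2 := ⟨q - 2, by omega⟩
  refine ⟨?_, ?_, ?_⟩
  · -- cardinality of the stabilizer
    have horb : MulAction.orbit (Matrix.SpecialLinearGroup (Fin 2) (GaloisField 2 m)) P =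
        Set.univ := MulAction.orbit_eq_univ _ P
    have hcardorb :
        Nat.card (MulAction.orbit (Matrix.SpecialLinearGroup (Fin 2) (GaloisField 2 m)) P) =
          q + 1 := by
      rw [Nat.card_coe_set_eq, horb, Set.ncard_univ, card_Proj, hq]
    have hos := Nat.card_congr (MulAction.orbitProdStabilizerEquivGroup
      (Matrix.SpecialLinearGroup (Fin 2) (GaloisField 2 m)) P)
    rw [Nat.card_prod, hcardorb] at hos
    have hGL : Nat.card (GL (Fin 2) (GaloisField 2 m)) = (q ^ 2 - 1) * (q ^ 2 - q) := by
      rw [Matrix.card_GL_field, Fin.prod_univ_two]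
      simp [hq]
    have hunits : Nat.card (GaloisField 2 m)ˣ = q - 1 := by
      rw [Nat.card_eq_fintype_card, Fintype.card_units, hq]
    have hSL := card_SL2_mul (K := GaloisField 2 m)
    rw [hunits, hGL] at hSL
    have h1' : q ^ 2 - 1 = (r + 3) * (r + 1) := by
      rw [hr, show (r + 2) ^ 2 = (r + 3) * (r + 1) + 1 from by ring]
      exact Nat.add_sub_cancel ((r + 3) * (r + 1)) 1
    have h2' : q ^ 2 - q = (r + 2) * (r + 1) := by
      rw [hr, show (r + 2) ^ 2 = (r + 2) * (r + 1) + (r + 2) from by ring]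
      exact Nat.add_sub_cancel ((r + 2) * (r + 1)) (r + 2)
    have hq1 : q + 1 = r + 3 := by omega
    have hqm1 : q - 1 = r + 1 := by omega
    set s := Nat.card
      (MulAction.stabilizer (Matrix.SpecialLinearGroup (Fin 2) (GaloisField 2 m)) P) with hsdef
    have hos' : (r + 3) * s = Nat.card (Matrix.SpecialLinearGroup (Fin 2) (GaloisField 2 m)) := by
      rw [← hq1]; exact hos
    have hSL' : Nat.card (Matrix.SpecialLinearGroup (Fin 2) (GaloisField 2 m)) * (r + 1) =
        ((r + 3) * (r + 1)) * ((r + 2) * (r + 1)) := by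
      rw [hqm1, h1', h2'] at hSL; exact hSL
    have hkey : ((r + 3) * s) * (r + 1) = ((r + 3) * (r + 1)) * ((r + 2) * (r + 1)) := by
      rw [hos']; exact hSL'
    have hs : s = (r + 2) * (r + 1) := by
      have hpos : 0 < (r + 3) * (r + 1) := by positivity
      apply Nat.eq_of_mul_eq_mul_left hpos
      calc (r + 3) * (r + 1) * s = ((r + 3) * s) * (r + 1) := by ring
      _ = _ := hkey
    rw [hs, hqm1, hr]
  · intro g hg
    exact exists_pair_of_fix g P (MulAction.mem_stabilizer_iff.mp hg)
  · intro g hg h hh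
    have hg' : g ∈ MulAction.stabilizer (Matrix.SpecialLinearGroup (Fin 2) (GaloisField 2 m)) P :=
      hg
    have hh' : h ∈ MulAction.stabilizer (Matrix.SpecialLinearGroup (Fin 2) (GaloisField 2 m)) P :=
      hh
    have hmem : h⁻¹ * g ∈
        MulAction.stabilizer (Matrix.SpecialLinearGroup (Fin 2) (GaloisField 2 m)) P :=
      mul_mem (inv_mem hh') hg'
    obtain ⟨S, hS2, hSfix⟩ := exists_pair_of_fix (h⁻¹ * g) P (MulAction.mem_stabilizer_iff.mp hmem)
    refine ⟨S, hS2, ?_⟩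
    calc g • S = (h * (h⁻¹ * g)) • S := by rw [mul_inv_cancel_left]
    _ = h • ((h⁻¹ * g) • S) := mul_smul _ _ _
    _ = h • S := by rw [hSfix]
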